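/- Let z and t_{j_1}, ..., t_{j_M} be pairwise distinct complex numbers and let x be an additional index. For a list L of distinct complex points define ζ_L(s) where one entry of the list is allowed to be a variable; specifically, view ζ as a rational function of the coordinate t_x = s. Then: (1) if the list is I = (x, j_M, ..., j_1) (x leftmost), then lim_{s→∞} s · ζ_{(s, t_{j_M}, ..., t_{j_1})}(z) = ζ_{(t_{j_M},...,t_{j_1})}(z); (2) if x occurs in the list but not in the leftmost position, then lim_{s→∞} s · ζ_I(z) = 0. Here ζ_{(c_N,...,c_1)}(z) = ∏_{k=2}^N 1/(c_k − c_{k-1}) · 1/(c_1 − z) and the limit is along the filter of complex numbers of large modulus. -/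

import Mathlib

open Filter

/-- `zeta [c_N,...,c_1] z = (∏_{k=2}^N 1/(c_k - c_{k-1})) · 1/(c_1 - z)`, `zeta [] z = 1`. -/
noncomputable def zeta : List ℂ → ℂ → ℂ
  | [], _ => 1
  | [a], z => (a - z)⁻¹
  | a :: b :: rest, z => (a - b)⁻¹ * zeta (b :: rest) z

lemma sub_cobounded (a : ℂ) :
    Tendsto (fun s : ℂ => s - a) (Bornology.cobounded ℂ) (Bornology.cobounded ℂ) := by
  rw [← tendsto_norm_atTop_iff_cobounded]
  have h1 : Tendsto (fun s : ℂ => ‖s‖ - ‖a‖) (Bornology.cobounded ℂ) atTop :=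
    (tendsto_norm_cobounded_atTop.atTop_add tendsto_const_nhds)
  refine tendsto_atTop_mono (fun s => ?_) h1
  simpa using norm_sub_norm_le s a

lemma inv_sub_tendsto (a : ℂ) :
    Tendsto (fun s : ℂ => (s - a)⁻¹) (Bornology.cobounded ℂ) (nhds 0) :=
  tendsto_inv₀_cobounded.comp (sub_cobounded a)

lemma key_tendsto (a : ℂ) :
    Tendsto (fun s : ℂ => s * (s - a)⁻¹) (Bornology.cobounded ℂ) (nhds 1) := by
  have h : Tendsto (fun s : ℂ => 1 + a * (s - a)⁻¹) (Bornology.cobounded ℂ) (nhds 1) := by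
    have := (inv_sub_tendsto a).const_mul a
    simpa using tendsto_const_nhds.add this
  refine h.congr' ?_
  filter_upwards [eventually_cobounded_le_norm (‖a‖ + 1)] with s hs
  have hne : s - a ≠ 0 := by
    intro hsa
    rw [sub_eq_zero] at hsa
    subst hsa
    linarith
  field_simp
  ring

lemma zeta_head_tendsto (z : ℂ) (Q : List ℂ) :
    Tendsto (fun s : ℂ => zeta (s :: Q) z) (Bornology.cobounded ℂ) (nhds 0) := by
  match Q with
  | [] => simpa [zeta] using inv_sub_tendsto z
  | q :: rest =>
    have := (inv_sub_tendsto q).mul_const (zeta (q :: rest) z)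
    simpa [zeta] using this

theorem residue_at_infty (z : ℂ) (L : List ℂ) (h : (z :: L).Pairwise (· ≠ ·)) :
    Tendsto (fun s : ℂ => s * zeta (s :: L) z) (Bornology.cobounded ℂ)
        (nhds (zeta L z)) ∧
      ∀ P Q : List ℂ, P ≠ [] → P ++ Q = L →
        Tendsto (fun s : ℂ => s * zeta (P ++ s :: Q) z) (Bornology.cobounded ℂ)
          (nhds 0) := by
  constructor
  · match L with
    | [] => simpa [zeta] using key_tendsto z
    | b :: rest =>
      have := (key_tendsto b).mul_const (zeta (b :: rest) z)
      simp only [one_mul] at this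
      refine this.congr fun s => ?_
      simp [zeta]; ring
  · intro P Q hP hPQ
    clear h hPQ
    induction P with
    | nil => exact absurd rfl hP
    | cons p P' ih =>
      match P' with
      | [] =>
        have h1 : Tendsto (fun s : ℂ => s * (p - s)⁻¹) (Bornology.cobounded ℂ) (nhds (-1)) := by
          have h2 : Tendsto (fun s : ℂ => -(s * (s - p)⁻¹)) (Bornology.cobounded ℂ)
              (nhds (-1)) := (key_tendsto p).neg
          refine h2.congr fun s => ?_
          rw [show p - s = -(s - p) by ring, inv_neg]
          ring
        have := h1.mul (zeta_head_tendsto z Q)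
        simp only [neg_one_mul, neg_zero] at this
        refine this.congr fun s => ?_
        simp [zeta]; ring
      | p' :: P'' =>
        have hih := ih (by simp)
        have := hih.const_mul ((p - p')⁻¹)
        simp only [mul_zero] at this
        refine this.congr fun s => ?_
        show (p - p')⁻¹ * (s * zeta ((p' :: P'') ++ s :: Q) z) = _
        simp [zeta]; ring
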